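/- Let k ≥ 2 be an integer and G a k-connected (K₂ ∪ kK₁)-free graph that is not hamiltonian, and let C be a longest cycle of G. Then every connected component of G − V(C) consists of a single vertex. -/

import Mathlib

open SimpleGraph

variable {V : Type*}

/-- The number of connected components after deleting the vertex set `S`. -/
noncomputable def omegaDel [Fintype V] (G : SimpleGraph V) (S : Finset V) : ℕ :=
  Nat.card ((G.induce ((S : Set V)ᶜ)).ConnectedComponent)

/-- `G` is `m`-connected. -/
def IsKConn [Fintype V] (G : SimpleGraph V) (m : ℕ) : Prop :=
  m < Fintype.card V ∧ ∀ S : Finset V, S.card < m → (G.induce ((S : Set V)ᶜ)).Connected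

/-- The independence number of `G`. -/
noncomputable def alphaNum [Fintype V] (G : SimpleGraph V) : ℕ :=
  sSup {n | ∃ s : Finset V, (∀ a ∈ s, ∀ b ∈ s, ¬ G.Adj a b) ∧ s.card = n}

/-- The minimum degree of `G`. -/
noncomputable def minDeg [Fintype V] (G : SimpleGraph V) : ℕ :=
  sInf {d | ∃ v : V, (G.neighborSet v).ncard = d}

/-- The graph `K₂ ∪ kK₁`. -/
def K2kK1 (k : ℕ) : SimpleGraph (Fin 2 ⊕ Fin k) :=
  SimpleGraph.fromRel fun a b => a.isLeft ∧ b.isLeft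

/-- `G` contains no induced copy of `H`. -/
def IndFree {W : Type*} (H : SimpleGraph W) (G : SimpleGraph V) : Prop :=
  IsEmpty (H ↪g G)

/-- `G` has a hamiltonian cycle. -/
def Ham [DecidableEq V] (G : SimpleGraph V) : Prop :=
  ∃ (a : V) (p : G.Walk a a), p.IsHamiltonianCycle

/-- `G` is hamiltonian-connected. -/
def HamConn [DecidableEq V] (G : SimpleGraph V) : Prop :=
  ∀ a b : V, a ≠ b → ∃ p : G.Walk a b, p.IsHamiltonian

/-- The Petersen graph. -/
def petersen : SimpleGraph (ZMod 5 ⊕ ZMod 5) :=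
  SimpleGraph.fromRel fun a b =>
    match a, b with
    | Sum.inl i, Sum.inl j => i = j + 1
    | Sum.inr i, Sum.inr j => i = j + 2
    | Sum.inl i, Sum.inr j => i = j
    | _, _ => False

section CycleToolkit

variable {V : Type*} {G : SimpleGraph V}

def walkOfChain (G : SimpleGraph V) :
    ∀ (l : List V) (hne : l ≠ []) (_ : l.Chain' G.Adj), G.Walk (l.head hne) (l.getLast hne)
  | [a], _, _ => Walk.nil
  | a :: b :: t, _, hc =>
    (Walk.cons (List.isChain_cons_cons.mp hc).1
      (walkOfChain G (b :: t) (by simp) (List.isChain_cons_cons.mp hc).2)).copy rfl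
      (List.getLast_cons (by simp)).symm

lemma support_walkOfChain (G : SimpleGraph V) :
    ∀ (l : List V) (hne : l ≠ []) (hc : l.Chain' G.Adj),
      (walkOfChain G l hne hc).support = l
  | [a], _, _ => rfl
  | a :: b :: t, _, hc => by
    show a :: (walkOfChain G (b :: t) (by simp) (List.isChain_cons_cons.mp hc).2).support = _
    exact congrArg (List.cons a) (support_walkOfChain G (b :: t) _ _)

lemma closing_edge_not_mem {x y : V} (p : G.Walk x y) (hp : p.IsPath) (h2 : 2 ≤ p.length) :
    s(y, x) ∉ p.edges := by
  intro hmem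
  cases p with
  | nil => simp at h2
  | @cons u c w h q =>
    simp only [Walk.edges_cons, List.mem_cons] at hmem
    rw [Walk.cons_isPath_iff] at hp
    rcases hmem with heq | hmem
    · rw [Sym2.eq_iff] at heq
      rcases heq with ⟨h1, h2'⟩ | ⟨h1, h2'⟩
      · subst h1; subst h2'; exact h.ne rfl
      · subst h1
        have : q = Walk.nil := Walk.isPath_iff_eq_nil.mp hp.1
        subst this; simp at h2
    · exact hp.2 (Walk.snd_mem_support_of_mem_edges q hmem)

lemma exists_cycle_of_list (l : List V) (h3 : 3 ≤ l.length) (hnd : l.Nodup)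
    (hc : l.Chain' G.Adj)
    (hcl : ∀ x ∈ l.getLast?, ∀ y ∈ l.head?, G.Adj x y) :
    ∃ (v : V) (c : G.Walk v v), c.IsCycle ∧ c.length = l.length := by
  have hne : l ≠ [] := by rintro rfl; simp at h3
  have hcl' : G.Adj (l.getLast hne) (l.head hne) :=
    hcl _ (List.getLast?_eq_getLast hne ▸ rfl) _ (List.head?_eq_head hne ▸ rfl)
  set p := walkOfChain G l hne hc with hp
  have hsupp : p.support = l := support_walkOfChain G l hne hc
  have hpath : p.IsPath := by rw [Walk.isPath_def, hsupp]; exact hnd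
  have hlen : p.length + 1 = l.length := by
    have := p.length_support
    rw [hsupp] at this; omega
  have h2 : 2 ≤ p.length := by omega
  refine ⟨_, Walk.cons hcl' p, ?_, by simp; omega⟩
  rw [Walk.cons_isCycle_iff]
  exact ⟨hpath, closing_edge_not_mem p hpath h2⟩

lemma head?_map_range {g : ℕ → V} {m : ℕ} (hm : 0 < m) :
    ((List.range m).map g).head? = some (g 0) := by
  cases m with
  | zero => omega
  | succ m => rw [List.range_succ_eq_map]; simp

lemma getLast?_map_range {g : ℕ → V} {m : ℕ} (hm : 0 < m) :
    ((List.range m).map g).getLast? = some (g (m - 1)) := by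
  have hne : (List.range m).map g ≠ [] := by
    simp [List.range_eq_nil]; omega
  rw [List.getLast?_eq_getLast hne, List.getLast_eq_getElem]
  simp [List.getElem_map, List.getElem_range]

lemma chain'_map_range {g : ℕ → V} {m : ℕ} (h : ∀ t, t + 1 < m → G.Adj (g t) (g (t + 1))) :
    ((List.range m).map g).Chain' G.Adj := by
  rw [List.Chain', List.isChain_map]
  cases m with
  | zero => simp
  | succ m => exact (List.isChain_range_succ _ m).mpr fun i hi => h i (by omega)

lemma nodup_map_range {g : ℕ → V} {m : ℕ}
    (h : ∀ s < m, ∀ t < m, g s = g t → s = t) : ((List.range m).map g).Nodup :=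
  List.Nodup.map_on (fun s hs t ht => h s (List.mem_range.mp hs) t (List.mem_range.mp ht))
    List.nodup_range

lemma mem_map_range {g : ℕ → V} {m : ℕ} {v : V} (h : v ∈ (List.range m).map g) :
    ∃ t < m, v = g t := by
  obtain ⟨t, ht, rfl⟩ := List.mem_map.mp h
  exact ⟨t, List.mem_range.mp ht, rfl⟩

lemma exists_chain_list {S : Set V} {x y : ↥S} (hr : (G.induce S).Reachable x y) :
    ∃ P : List V, P ≠ [] ∧ P.Nodup ∧ P.Chain' G.Adj ∧ P.head? = some ↑x ∧
      P.getLast? = some ↑y ∧ ∀ v ∈ P, v ∈ S := by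
  obtain ⟨w⟩ := hr
  classical
  set p := w.toPath with hp
  refine ⟨p.1.support.map Subtype.val,
    fun h => p.1.support_ne_nil (List.map_eq_nil_iff.mp h), ?_, ?_, ?_, ?_, ?_⟩
  · exact (p.2.support_nodup).map Subtype.val_injective
  · rw [List.Chain', List.isChain_map]
    exact (Walk.isChain_adj_support p.1).imp fun a b hab => hab
  · rw [List.head?_map, Walk.support_eq_cons]; rfl
  · rw [List.getLast?_map]
    rw [List.getLast?_eq_getLast (by simp), Walk.getLast_support]; rfl
  · intro v hv
    obtain ⟨a, _, rfl⟩ := List.mem_map.mp hv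
    exact a.2

lemma zmod_cast_inj {n : ℕ} (s t : ℕ) (hs : s < n) (ht : t < n)
    (h : (s : ZMod n) = t) : s = t := by
  haveI : NeZero n := ⟨by omega⟩
  have := congrArg ZMod.val h
  rwa [ZMod.val_cast_of_lt hs, ZMod.val_cast_of_lt ht] at this

lemma no_detour {n : ℕ} (hn : 3 ≤ n) (f : ZMod n → V) (hinj : Function.Injective f)
    (hadj : ∀ i : ZMod n, G.Adj (f i) (f (i + 1)))
    (hlong : ∀ (v : V) (c : G.Walk v v), c.IsCycle → c.length ≤ n)
    (i : ZMod n) (P : List V) (hPne : P ≠ []) (hPnd : P.Nodup)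
    (hPchain : P.Chain' G.Adj)
    (hPS : ∀ v ∈ P, v ∉ Set.range f)
    (hhead : ∀ h0 ∈ P.head?, G.Adj (f i) h0)
    (hlast : ∀ h1 ∈ P.getLast?, G.Adj h1 (f (i + 1))) : False := by
  haveI : NeZero n := ⟨by omega⟩
  have hPlen : 1 ≤ P.length := List.length_pos_iff.mpr hPne
  have hLne : (List.range n).map (fun t : ℕ => f (i + 1 + t)) ≠ [] := by
    simp [List.range_eq_nil]; omega
  have hLlast : ((List.range n).map (fun t : ℕ => f (i + 1 + t))).getLast? = some (f i) := by
    rw [getLast?_map_range (by omega)]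
    congr 2
    have : ((n - 1 : ℕ) : ZMod n) = (n : ZMod n) - 1 := by
      push_cast [Nat.cast_sub (by omega : 1 ≤ n)]; ring
    rw [this, ZMod.natCast_self]; ring
  have hLhead : ((List.range n).map (fun t : ℕ => f (i + 1 + t))).head? = some (f (i + 1)) := by
    rw [head?_map_range (by omega)]
    norm_num
  have hLnd : ((List.range n).map (fun t : ℕ => f (i + 1 + t))).Nodup := by
    refine nodup_map_range fun s hs t ht hst => ?_
    have := hinj hst
    exact zmod_cast_inj s t hs ht (by linear_combination this - this + (add_left_cancel this : (s : ZMod n) = t))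
  have hLchain : ((List.range n).map (fun t : ℕ => f (i + 1 + t))).Chain' G.Adj := by
    refine chain'_map_range fun t ht => ?_
    have := hadj (i + 1 + t)
    convert this using 2
    push_cast; ring
  have hMnd : ((List.range n).map (fun t : ℕ => f (i + 1 + t)) ++ P).Nodup := by
    rw [List.nodup_append]
    refine ⟨hLnd, hPnd, fun v hv v' hv' hvv => ?_⟩
    subst hvv
    obtain ⟨t, ht, rfl⟩ := mem_map_range hv
    exact hPS _ hv' ⟨_, rfl⟩
  have hMchain : ((List.range n).map (fun t : ℕ => f (i + 1 + t)) ++ P).Chain' G.Adj := by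
    rw [List.Chain', List.isChain_append]
    refine ⟨hLchain, hPchain, fun x hx y hy => ?_⟩
    rw [hLlast, Option.mem_some_iff] at hx
    subst hx
    exact hhead y hy
  have hMcl : ∀ x ∈ ((List.range n).map (fun t : ℕ => f (i + 1 + t)) ++ P).getLast?,
      ∀ y ∈ ((List.range n).map (fun t : ℕ => f (i + 1 + t)) ++ P).head?, G.Adj x y := by
    intro x hx y hy
    rw [List.getLast?_append_of_ne_nil _ hPne] at hx
    rw [List.head?_append_of_ne_nil _ hLne] at hy
    rw [hLhead, Option.mem_some_iff] at hy
    subst hy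
    exact hlast x hx
  obtain ⟨v, c, hc, hclen⟩ := exists_cycle_of_list
    ((List.range n).map (fun t : ℕ => f (i + 1 + t)) ++ P)
    (by simp; omega) hMnd hMchain hMcl
  have := hlong v c hc
  rw [hclen, List.length_append, List.length_map, List.length_range] at this
  omega

lemma no_crossing {n : ℕ} (hn : 3 ≤ n) (f : ZMod n → V) (hinj : Function.Injective f)
    (hadj : ∀ i : ZMod n, G.Adj (f i) (f (i + 1)))
    (hlong : ∀ (v : V) (c : G.Walk v v), c.IsCycle → c.length ≤ n)
    (i j : ZMod n) (hij : i ≠ j) (P : List V) (hPne : P ≠ []) (hPnd : P.Nodup)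
    (hPchain : P.Chain' G.Adj)
    (hPS : ∀ v ∈ P, v ∉ Set.range f)
    (hhead : ∀ h0 ∈ P.head?, G.Adj (f i) h0)
    (hlast : ∀ h1 ∈ P.getLast?, G.Adj h1 (f j))
    (hcross : G.Adj (f (i + 1)) (f (j + 1))) : False := by
  haveI : NeZero n := ⟨by omega⟩
  have hPlen : 1 ≤ P.length := List.length_pos_iff.mpr hPne
  set d : ℕ := (i - j).val with hdd
  have hdcast : (d : ZMod n) = i - j := ZMod.natCast_zmod_val _
  have hd1 : 1 ≤ d := by
    rcases Nat.eq_zero_or_pos d with h | h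
    · exact absurd (sub_eq_zero.mp ((ZMod.val_eq_zero _).mp h)) hij
    · omega
  have hdn : d < n := ZMod.val_lt _
  -- the two arcs
  have hAhead : ((List.range d).map (fun t : ℕ => f (j + 1 + t))).head? = some (f (j + 1)) := by
    rw [head?_map_range (by omega)]; norm_num
  have hAlast : ((List.range d).map (fun t : ℕ => f (j + 1 + t))).getLast? = some (f i) := by
    rw [getLast?_map_range (by omega)]
    congr 2
    have h1 : ((d - 1 : ℕ) : ZMod n) = (d : ZMod n) - 1 := by
      push_cast [Nat.cast_sub hd1]; ring
    rw [h1, hdcast]; ring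
  have hBhead : ((List.range (n - d)).map (fun t : ℕ => f (j - t))).head? = some (f j) := by
    rw [head?_map_range (by omega)]; norm_num
  have hBlast : ((List.range (n - d)).map (fun t : ℕ => f (j - t))).getLast? = some (f (i + 1)) := by
    rw [getLast?_map_range (by omega)]
    congr 2
    have h1 : (n : ℕ) - d - 1 = n - (d + 1) := by omega
    have h2 : ((n - (d + 1) : ℕ) : ZMod n) = (n : ZMod n) - (d + 1 : ℕ) := by
      rw [Nat.cast_sub (by omega : d + 1 ≤ n)]
    rw [h1, h2, ZMod.natCast_self]
    push_cast [hdcast]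
    ring
  have hAchain : ((List.range d).map (fun t : ℕ => f (j + 1 + t))).Chain' G.Adj := by
    refine chain'_map_range fun t ht => ?_
    have := hadj (j + 1 + t)
    convert this using 2
    push_cast; ring
  have hBchain : ((List.range (n - d)).map (fun t : ℕ => f (j - t))).Chain' G.Adj := by
    refine chain'_map_range fun t ht => ?_
    have := (hadj (j - (t + 1 : ℕ))).symm
    convert this using 2 <;> push_cast <;> ring
  have hAnd : ((List.range d).map (fun t : ℕ => f (j + 1 + t))).Nodup := by
    refine nodup_map_range fun s hs t ht hst => ?_
    exact zmod_cast_inj s t (by omega) (by omega) (add_left_cancel (hinj hst))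
  have hBnd : ((List.range (n - d)).map (fun t : ℕ => f (j - t))).Nodup := by
    refine nodup_map_range fun s hs t ht hst => ?_
    exact zmod_cast_inj s t (by omega) (by omega) (sub_right_injective (hinj hst))
  -- A and B are disjoint
  have hABdisj : ∀ v ∈ (List.range d).map (fun t : ℕ => f (j + 1 + t)),
      v ∉ (List.range (n - d)).map (fun t : ℕ => f (j - t)) := by
    intro v hv hv'
    obtain ⟨s, hs, rfl⟩ := mem_map_range hv
    obtain ⟨t, ht, heq⟩ := mem_map_range hv'
    have h1 : j + 1 + (s : ZMod n) = j - t := hinj heq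
    have h2 : ((s + t + 1 : ℕ) : ZMod n) = 0 := by
      push_cast
      linear_combination h1
    rw [ZMod.natCast_eq_zero_iff] at h2
    have := Nat.le_of_dvd (by omega) h2
    omega
  have hPA : ∀ v ∈ P, v ∉ (List.range d).map (fun t : ℕ => f (j + 1 + t)) := by
    intro v hv hv'
    obtain ⟨t, ht, rfl⟩ := mem_map_range hv'
    exact hPS _ hv ⟨_, rfl⟩
  have hPB : ∀ v ∈ P, v ∉ (List.range (n - d)).map (fun t : ℕ => f (j - t)) := by
    intro v hv hv'
    obtain ⟨t, ht, rfl⟩ := mem_map_range hv'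
    exact hPS _ hv ⟨_, rfl⟩
  have hBne : (List.range (n - d)).map (fun t : ℕ => f (j - t)) ≠ [] := by
    simp [List.range_eq_nil]; omega
  have hAne : (List.range d).map (fun t : ℕ => f (j + 1 + t)) ≠ [] := by
    simp [List.range_eq_nil]; omega
  -- assemble M = A ++ (P ++ B)
  have hMnd : ((List.range d).map (fun t : ℕ => f (j + 1 + t)) ++
      (P ++ (List.range (n - d)).map (fun t : ℕ => f (j - t)))).Nodup := by
    rw [List.nodup_append]
    refine ⟨hAnd, ?_, ?_⟩
    · rw [List.nodup_append]
      exact ⟨hPnd, hBnd, fun a ha b hb hab => by subst hab; exact hPB a ha hb⟩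
    · intro v hv v' hv' hvv
      subst hvv
      rw [List.mem_append] at hv'
      rcases hv' with h | h
      · exact hPA v h hv
      · exact hABdisj v hv h
  have hMchain : ((List.range d).map (fun t : ℕ => f (j + 1 + t)) ++
      (P ++ (List.range (n - d)).map (fun t : ℕ => f (j - t)))).Chain' G.Adj := by
    rw [List.Chain', List.isChain_append]
    refine ⟨hAchain, ?_, ?_⟩
    · rw [List.isChain_append]
      refine ⟨hPchain, hBchain, fun x hx y hy => ?_⟩
      rw [hBhead, Option.mem_some_iff] at hy
      subst hy
      exact hlast x hx
    · intro x hx y hy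
      rw [hAlast, Option.mem_some_iff] at hx
      subst hx
      rw [List.head?_append_of_ne_nil _ hPne] at hy
      exact hhead y hy
  have hMcl : ∀ x ∈ ((List.range d).map (fun t : ℕ => f (j + 1 + t)) ++
        (P ++ (List.range (n - d)).map (fun t : ℕ => f (j - t)))).getLast?,
      ∀ y ∈ ((List.range d).map (fun t : ℕ => f (j + 1 + t)) ++
        (P ++ (List.range (n - d)).map (fun t : ℕ => f (j - t)))).head?, G.Adj x y := by
    intro x hx y hy
    rw [List.getLast?_append_of_ne_nil _ (by simp [hBne]),
      List.getLast?_append_of_ne_nil _ hBne, hBlast, Option.mem_some_iff] at hx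
    rw [List.head?_append_of_ne_nil _ hAne, hAhead, Option.mem_some_iff] at hy
    subst hx; subst hy
    exact hcross
  obtain ⟨v, c, hc, hclen⟩ := exists_cycle_of_list _
    (by simp; omega) hMnd hMchain hMcl
  have := hlong v c hc
  rw [hclen] at this
  simp only [List.length_append, List.length_map, List.length_range] at this
  omega
end CycleToolkit

noncomputable def buildEmbedding {V : Type*} (G : SimpleGraph V) (k : ℕ) (va vb : V)
    (hone : G.Adj va vb) (wseq : Fin k → V)
    (hwinj : Function.Injective wseq)
    (hwa : ∀ t, ¬ G.Adj va (wseq t)) (hwb : ∀ t, ¬ G.Adj vb (wseq t))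
    (hww : ∀ s t, s ≠ t → ¬ G.Adj (wseq s) (wseq t))
    (hva : ∀ t, va ≠ wseq t) (hvb : ∀ t, vb ≠ wseq t) :
    (K2kK1 k) ↪g G := by
  refine ⟨⟨Sum.elim (fun s => if s = 0 then va else vb) wseq, ?_⟩, ?_⟩
  · rintro (a | a) (b | b) hab <;> simp only [Sum.elim_inl, Sum.elim_inr] at hab
    · fin_cases a <;> fin_cases b <;> revert hab <;>
        simp only [if_pos rfl, if_neg (by decide : (1 : Fin 2) ≠ 0)] <;> intro hab
      · trivial
      · exact absurd hab hone.ne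
      · exact absurd hab.symm hone.ne
      · trivial
    · exfalso
      revert hab
      fin_cases a <;> simp only [if_pos rfl, if_neg (by decide : (1 : Fin 2) ≠ 0)] <;>
        intro hab
      · exact hva b hab
      · exact hvb b hab
    · exfalso
      revert hab
      fin_cases b <;> simp only [if_pos rfl, if_neg (by decide : (1 : Fin 2) ≠ 0)] <;>
        intro hab
      · exact hva a hab.symm
      · exact hvb a hab.symm
    · rw [hwinj hab]
  · intro a b
    show G.Adj _ _ ↔ _
    have hKadj : (K2kK1 k).Adj a b ↔
        a ≠ b ∧ (a.isLeft ∧ b.isLeft ∨ b.isLeft ∧ a.isLeft) := by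
      rw [K2kK1, fromRel_adj]
    rw [hKadj]
    rcases a with a | a <;> rcases b with b | b
    · simp only [Function.Embedding.coeFn_mk, Sum.elim_inl, Sum.isLeft_inl, ne_eq,
        Sum.inl.injEq]
      constructor
      · intro hadj
        refine ⟨fun hh => ?_, by simp⟩
        subst hh
        exact hadj.ne rfl
      · rintro ⟨hab, -⟩
        fin_cases a <;> fin_cases b <;> simp_all <;>
          first
            | exact absurd rfl hab
            | exact hone
            | exact hone.symm
    · simp only [Function.Embedding.coeFn_mk, Sum.elim_inl, Sum.elim_inr, Sum.isLeft_inl,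
        Sum.isLeft_inr]
      refine iff_of_false ?_ (by simp)
      fin_cases a <;> simp only [if_pos rfl, if_neg (by decide : (1 : Fin 2) ≠ 0)]
      · exact hwa b
      · exact hwb b
    · simp only [Function.Embedding.coeFn_mk, Sum.elim_inl, Sum.elim_inr, Sum.isLeft_inl,
        Sum.isLeft_inr]
      refine iff_of_false ?_ (by simp)
      fin_cases b <;> simp only [if_pos rfl, if_neg (by decide : (1 : Fin 2) ≠ 0)]
      · exact fun hc => hwa a hc.symm
      · exact fun hc => hwb a hc.symm
    · simp only [Function.Embedding.coeFn_mk, Sum.elim_inr, Sum.isLeft_inr]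
      refine iff_of_false ?_ (by simp)
      by_cases hab : a = b
      · subst hab; exact fun hc => hc.ne rfl
      · exact hww a b hab

/-- In a non-hamiltonian `k`-connected `(K₂ ∪ kK₁)`-free graph, every component of
`G - C` for a longest cycle `C` is a single vertex. -/
theorem stmt_11 {V : Type*} [Fintype V] [DecidableEq V] (k : ℕ) (hk : 2 ≤ k)
    (G : SimpleGraph V) (hconn : IsKConn G k) (hfree : IndFree (K2kK1 k) G)
    (hnh : ¬ Ham G) (n : ℕ) (hn : 3 ≤ n)
    (f : ZMod n → V) (hinj : Function.Injective f)
    (hadj : ∀ i : ZMod n, G.Adj (f i) (f (i + 1)))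
    (hlong : ∀ (v : V) (c : G.Walk v v), c.IsCycle → c.length ≤ n)
    (H : (G.induce (Set.range f)ᶜ).ConnectedComponent) :
    H.supp.Subsingleton := by
  classical
  haveI : NeZero n := ⟨by omega⟩
  intro x hx y hy
  by_contra hne
  rw [ConnectedComponent.mem_supp_iff] at hx hy
  -- get an adjacent pair inside the component
  obtain ⟨w⟩ : (G.induce (Set.range f)ᶜ).Reachable x y :=
    ConnectedComponent.exact (hx.trans hy.symm)
  -- the predicate of belonging to component H
  set InH : V → Prop :=
    fun v => ∃ hv : v ∈ (Set.range f)ᶜ,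
      (G.induce (Set.range f)ᶜ).connectedComponentMk ⟨v, hv⟩ = H with hInH
  have hmemH : ∀ (u : ↥((Set.range f)ᶜ : Set V)),
      (G.induce (Set.range f)ᶜ).connectedComponentMk u = H → InH ↑u := by
    intro u hu
    exact ⟨u.2, by rwa [Subtype.coe_eta]⟩
  cases w with
  | nil => exact hne rfl
  | @cons _ u _ h q =>
    have hvaInH : InH ↑x := hmemH x hx
    have hvbInH : InH ↑u := by
      refine hmemH u ?_
      rw [← hx]
      exact (ConnectedComponent.connectedComponentMk_eq_of_adj h).symm
    have hvavb : G.Adj ↑x ↑u := h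
    have hvane : (↑x : V) ≠ ↑u := hvavb.ne
    -- basic closure facts
    have reachInH : ∀ a b : V, InH a → b ∈ (Set.range f)ᶜ → G.Adj a b → InH b := by
      intro a b ⟨ha, hcomp⟩ hb hab
      refine ⟨hb, ?_⟩
      rw [← hcomp]
      exact (ConnectedComponent.connectedComponentMk_eq_of_adj
        (by exact hab.symm : (G.induce (Set.range f)ᶜ).Adj ⟨b, hb⟩ ⟨a, ha⟩)).symm.symm
    have getP : ∀ a b : V, InH a → InH b →
        ∃ P : List V, P ≠ [] ∧ P.Nodup ∧ P.Chain' G.Adj ∧ P.head? = some a ∧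
          P.getLast? = some b ∧ ∀ v ∈ P, v ∉ Set.range f := by
      intro a b ⟨ha, hca⟩ ⟨hb, hcb⟩
      have hr : (G.induce (Set.range f)ᶜ).Reachable ⟨a, ha⟩ ⟨b, hb⟩ :=
        ConnectedComponent.exact (hca.trans hcb.symm)
      obtain ⟨P, h1, h2, h3, h4, h5, h6⟩ := exists_chain_list hr
      exact ⟨P, h1, h2, h3, h4, h5, fun v hv => h6 v hv⟩
    -- attachment set
    set N : Finset (ZMod n) :=
      Finset.univ.filter (fun i => ∃ v, InH v ∧ G.Adj (f i) v) with hN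
    have memN : ∀ i : ZMod n, i ∈ N ↔ ∃ v, InH v ∧ G.Adj (f i) v := by
      intro i; simp [hN]
    -- Claim A : successors of attachments have no neighbour in H
    have clA : ∀ i ∈ N, ∀ v, InH v → ¬ G.Adj (f (i + 1)) v := by
      intro i hi v hv hadj2
      obtain ⟨h₀, hh₀, hadj0⟩ := (memN i).mp hi
      obtain ⟨P, h1, h2, h3, h4, h5, h6⟩ := getP h₀ v hh₀ hv
      refine no_detour hn f hinj hadj hlong i P h1 h2 h3 h6 ?_ ?_
      · intro z hz
        rw [h4, Option.mem_some_iff] at hz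
        subst hz; exact hadj0
      · intro z hz
        rw [h5, Option.mem_some_iff] at hz
        subst hz; exact hadj2.symm
    -- Claim B : successors of attachments are pairwise nonadjacent
    have clB : ∀ i ∈ N, ∀ j ∈ N, i ≠ j → ¬ G.Adj (f (i + 1)) (f (j + 1)) := by
      intro i hi j hj hij hcross
      obtain ⟨hi', hhi', hadji⟩ := (memN i).mp hi
      obtain ⟨hj', hhj', hadjj⟩ := (memN j).mp hj
      obtain ⟨P, h1, h2, h3, h4, h5, h6⟩ := getP hi' hj' hhi' hhj'
      refine no_crossing hn f hinj hadj hlong i j hij P h1 h2 h3 h6 ?_ ?_ hcross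
      · intro z hz
        rw [h4, Option.mem_some_iff] at hz
        subst hz; exact hadji
      · intro z hz
        rw [h5, Option.mem_some_iff] at hz
        subst hz; exact hadjj.symm
    -- Claim C : at least k attachments
    have clC : k ≤ N.card := by
      by_contra hlt
      push_neg at hlt
      by_cases hall : ∀ j : ZMod n, j ∈ N
      · obtain ⟨v, hv, ha1⟩ := (memN 1).mp (hall 1)
        exact clA 0 (hall 0) v hv (by simpa using ha1)
      · push_neg at hall
        obtain ⟨j, hj⟩ := hall
        have hT : (N.image f).card < k := lt_of_le_of_lt Finset.card_image_le hlt
        have hconn' := hconn.2 (N.image f) hT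
        have hxT : (↑x : V) ∈ (↑(N.image f) : Set V)ᶜ := by
          intro hmem
          rw [Finset.mem_coe, Finset.mem_image] at hmem
          obtain ⟨i, _, hfi⟩ := hmem
          exact x.2 ⟨i, hfi⟩
        have hjT : f j ∈ (↑(N.image f) : Set V)ᶜ := by
          intro hmem
          rw [Finset.mem_coe, Finset.mem_image] at hmem
          obtain ⟨i, hiN, hfi⟩ := hmem
          cases hinj hfi
          exact hj hiN
        obtain ⟨w'⟩ := hconn'.preconnected ⟨↑x, hxT⟩ ⟨f j, hjT⟩
        have key : ∀ (a b : ↥((↑(N.image f) : Set V)ᶜ))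
            (w : (G.induce ((↑(N.image f) : Set V)ᶜ)).Walk a b), InH ↑a → InH ↑b := by
          intro a b w
          induction w with
          | nil => exact id
          | @cons a' c' b' hadj' q ih =>
            intro ha
            refine ih ?_
            have hG : G.Adj ↑a' ↑c' := hadj'
            by_cases hcS : (↑c' : V) ∈ (Set.range f)ᶜ
            · exact reachInH _ _ ha hcS hG
            · exfalso
              rw [Set.mem_compl_iff, not_not] at hcS
              obtain ⟨t, ht⟩ := hcS
              have htN : t ∈ N := (memN t).mpr ⟨↑a', ha, ht ▸ hG.symm⟩
              exact c'.2 (by rw [Finset.mem_coe, Finset.mem_image]; exact ⟨t, htN, ht⟩)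
        obtain ⟨hj', _⟩ := key _ _ w' hvaInH
        exact hj' ⟨j, rfl⟩
    -- choose k attachments and build the forbidden induced subgraph
    obtain ⟨N', hN'sub, hN'card⟩ := Finset.exists_subset_card_eq clC
    set g : Fin k → ZMod n := fun t => ↑(N'.equivFin.symm (Fin.cast hN'card.symm t)) with hg
    have hgmem : ∀ t, g t ∈ N := fun t => hN'sub (N'.equivFin.symm _).2
    have hginj : Function.Injective g := by
      intro s t hst
      have h1 := Subtype.val_injective hst
      have h2 := N'.equivFin.symm.injective h1
      exact Fin.cast_injective _ h2
    have hwa : ∀ t, ¬ G.Adj (↑x) (f (g t + 1)) :=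
      fun t hc => clA (g t) (hgmem t) _ hvaInH hc.symm
    have hwb : ∀ t, ¬ G.Adj (↑u) (f (g t + 1)) :=
      fun t hc => clA (g t) (hgmem t) _ hvbInH hc.symm
    have hww : ∀ s t, s ≠ t → ¬ G.Adj (f (g s + 1)) (f (g t + 1)) :=
      fun s t hst => clB (g s) (hgmem s) (g t) (hgmem t) (fun hh => hst (hginj hh))
    have hwinj : Function.Injective (fun t => f (g t + 1)) := by
      intro s t hst
      exact hginj (add_right_cancel (hinj hst))
    have hva' : ∀ t, (↑x : V) ≠ f (g t + 1) := fun t hh => x.2 ⟨g t + 1, hh.symm⟩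
    have hvb' : ∀ t, (↑u : V) ≠ f (g t + 1) := fun t hh => u.2 ⟨g t + 1, hh.symm⟩
    exact hfree.false (buildEmbedding G k (↑x) (↑u) hvavb _ hwinj hwa hwb hww hva' hvb')
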